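/- For g = 4: for every nonzero η ∈ 𝔽₂^4 × 𝔽₂^4, exactly 56 characteristics c ∈ 𝔽₂^4 × 𝔽₂^4 satisfy that both c and c + η are odd; equivalently, there are exactly 28 unordered pairs {c, c + η} of odd theta characteristics differing by η. (This is the combinatorial counterpart of Milne's bijection between pairs of tritangent planes of a genus 4 curve differing by η and the 28 bitangents of the associated plane quartic Prym curve.) -/
import Mathlib


/-- Theta characteristics for genus `g`, identified with pairs `(a, b) ∈ 𝔽₂^g × 𝔽₂^g`,
added componentwise. -/
abbrev ThetaChar (g : ℕ) := (Fin g → ZMod 2) × (Fin g → ZMod 2)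

/-- The parity form `q(c) = a · b = ∑ᵢ aᵢ bᵢ ∈ 𝔽₂`. -/
def qform {g : ℕ} (c : ThetaChar g) : ZMod 2 := ∑ i, c.1 i * c.2 i

/-- A characteristic is odd if `q(c) = 1`. -/
def IsOddChar {g : ℕ} (c : ThetaChar g) : Prop := qform c = 1

/-- A characteristic is even if `q(c) = 0`. -/
def IsEvenChar {g : ℕ} (c : ThetaChar g) : Prop := qform c = 0

/-- A triple `c₁, c₂, c₃` is azygetic if `q(c₁+c₂+c₃) + q(c₁) + q(c₂) + q(c₃) = 1`. -/
def AzyTriple {g : ℕ} (c₁ c₂ c₃ : ThetaChar g) : Prop :=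
  qform (c₁ + c₂ + c₃) + qform c₁ + qform c₂ + qform c₃ = 1

/-- An indexed system is azygetic if every triple of members with three distinct
indices is an azygetic triple. -/
def AzySystem {g n : ℕ} (c : Fin n → ThetaChar g) : Prop :=
  ∀ i j k : Fin n, i ≠ j → j ≠ k → i ≠ k → AzyTriple (c i) (c j) (c k)

/-- A system is essentially independent if every sum over a nonempty index subset of
even cardinality is nonzero. -/
def EssInd {g n : ℕ} (c : Fin n → ThetaChar g) : Prop :=
  ∀ s : Finset (Fin n), s.Nonempty → Even s.card → ∑ i ∈ s, c i ≠ 0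

/-! ### Auxiliary bit-vector machinery -/

/-- Bitwise xor on `Fin 16`. -/
def x16 (a b : Fin 16) : Fin 16 := ⟨(a.val ^^^ b.val) % 16, Nat.mod_lt _ (by norm_num)⟩

/-- Parity of the dot product of two 4-bit vectors encoded as elements of `Fin 16`. -/
def qpar (a b : Fin 16) : Bool :=
  (Nat.xor (Nat.xor (a.val &&& b.val) ((a.val &&& b.val) >>> 1))
    (Nat.xor ((a.val &&& b.val) >>> 2) ((a.val &&& b.val) >>> 3))) % 2 = 1

/-- Decoding a 4-bit vector from `Fin 16`. -/
def eF (x : Fin 16) : Fin 4 → ZMod 2 := fun i => (((x.val >>> i.val) % 2 : ℕ) : ZMod 2)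

theorem eF_add : ∀ x y : Fin 16, eF x + eF y = eF (x16 x y) := by decide

theorem eF_inj : ∀ x y : Fin 16, eF x = eF y → x = y := by decide

theorem eF_zero : eF 0 = 0 := by decide

theorem qform_eF : ∀ x y : Fin 16,
    qform (g := 4) (eF x, eF y) = (if qpar x y then 1 else 0) := by decide

set_option maxHeartbeats 4000000 in
set_option maxRecDepth 10000 in
theorem count56 : ∀ u v : Fin 16, ¬(u = 0 ∧ v = 0) →
    ((Finset.univ : Finset (Fin 16 × Fin 16)).filter
      (fun p => (qpar p.1 p.2 && qpar (x16 p.1 u) (x16 p.2 v)) = true)).card = 56 := by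
  decide

theorem eF_surj : Function.Surjective eF := by
  have : Function.Bijective eF :=
    (Fintype.bijective_iff_injective_and_card eF).2 ⟨fun x y => eF_inj x y, by simp⟩
  exact this.2

/-- For `g = 4` and every nonzero `η ∈ 𝔽₂^4 × 𝔽₂^4`, exactly `56` characteristics `c`
satisfy that both `c` and `c + η` are odd; equivalently, there are exactly `28`
unordered pairs `{c, c + η}` of odd theta characteristics differing by `η`. -/
theorem card_odd_pairs_differing_by_eta (η : ThetaChar 4) (hη : η ≠ 0) :
    Set.ncard {c : ThetaChar 4 | IsOddChar c ∧ IsOddChar (c + η)} = 56 ∧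
    Set.ncard {s : Finset (ThetaChar 4) |
        ∃ c : ThetaChar 4, IsOddChar c ∧ IsOddChar (c + η) ∧ s = {c, c + η}} = 28 := by
  classical
  obtain ⟨u, hu⟩ := eF_surj η.1
  obtain ⟨v, hv⟩ := eF_surj η.2
  have hη' : η = (eF u, eF v) := Prod.ext hu.symm hv.symm
  have huv : ¬(u = 0 ∧ v = 0) := by
    rintro ⟨rfl, rfl⟩
    exact hη (by rw [hη', eF_zero]; rfl)
  -- the finset of characteristics
  set F1 : Finset (ThetaChar 4) :=
    Finset.univ.filter (fun c : ThetaChar 4 => qform c = 1 ∧ qform (c + η) = 1) with hF1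
  -- the bijection with bit vectors
  have hbij : Function.Bijective (fun p : Fin 16 × Fin 16 => ((eF p.1, eF p.2) : ThetaChar 4)) := by
    constructor
    · rintro ⟨x, y⟩ ⟨x', y'⟩ h
      have h1 : eF x = eF x' := congrArg Prod.fst h
      have h2 : eF y = eF y' := congrArg Prod.snd h
      exact Prod.ext (eF_inj _ _ h1) (eF_inj _ _ h2)
    · rintro ⟨a, b⟩
      obtain ⟨x, hx⟩ := eF_surj a
      obtain ⟨y, hy⟩ := eF_surj b
      exact ⟨(x, y), by simp [hx, hy]⟩
  set E : (Fin 16 × Fin 16) ≃ ThetaChar 4 := Equiv.ofBijective _ hbij with hE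
  have hiffb : ∀ b : Bool, ((if b then (1 : ZMod 2) else 0) = 1) ↔ b = true := by decide
  have Hpt : ∀ p : Fin 16 × Fin 16,
      ((qpar p.1 p.2 && qpar (x16 p.1 u) (x16 p.2 v)) = true) ↔
      (qform (E p) = 1 ∧ qform (E p + η) = 1) := by
    rintro ⟨x, y⟩
    have hEp : E (x, y) = ((eF x, eF y) : ThetaChar 4) := rfl
    have hadd : ((eF x, eF y) : ThetaChar 4) + η = (eF (x16 x u), eF (x16 y v)) := by
      rw [hη', Prod.mk_add_mk, eF_add, eF_add]
    rw [hEp, hadd, qform_eF, qform_eF, hiffb, hiffb, Bool.and_eq_true]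
  have hcard1 : F1.card = 56 := by
    have : F1.card = ((Finset.univ : Finset (Fin 16 × Fin 16)).filter
        (fun p => (qpar p.1 p.2 && qpar (x16 p.1 u) (x16 p.2 v)) = true)).card := by
      rw [← Fintype.card_subtype, ← Fintype.card_subtype]
      exact Fintype.card_congr (E.subtypeEquiv Hpt).symm
    rw [this]
    exact count56 u v huv
  -- basic facts about the involution c ↦ c + η
  have hself : ∀ x : ZMod 2, x + x = 0 := by decide
  have hηη : η + η = 0 :=
    Prod.ext (funext fun i => hself (η.1 i)) (funext fun i => hself (η.2 i))
  have hinv : ∀ c : ThetaChar 4, c + η + η = c := by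
    intro c; rw [add_assoc, hηη, add_zero]
  have hne : ∀ c : ThetaChar 4, c ≠ c + η := by
    intro c h
    apply hη
    have := congrArg (fun z => z - c) h
    simpa using this.symm
  have hmem : ∀ c ∈ F1, c + η ∈ F1 := by
    intro c hc
    rw [hF1, Finset.mem_filter] at hc ⊢
    exact ⟨Finset.mem_univ _, hc.2.2, by rw [hinv]; exact hc.2.1⟩
  constructor
  · have hset : {c : ThetaChar 4 | IsOddChar c ∧ IsOddChar (c + η)} = ↑F1 := by
      ext c; simp [hF1, IsOddChar]
    rw [hset, Set.ncard_coe_finset, hcard1]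
  · set F2 : Finset (Finset (ThetaChar 4)) :=
      F1.image (fun c => ({c, c + η} : Finset (ThetaChar 4))) with hF2
    have hset2 : {s : Finset (ThetaChar 4) |
        ∃ c : ThetaChar 4, IsOddChar c ∧ IsOddChar (c + η) ∧ s = {c, c + η}} = ↑F2 := by
      ext s
      simp only [Set.mem_setOf_eq, Finset.coe_image, Set.mem_image, Finset.mem_coe,
        hF2, Finset.mem_image, hF1, Finset.mem_filter, Finset.mem_univ, true_and]
      constructor
      · rintro ⟨c, h1, h2, rfl⟩; exact ⟨c, ⟨h1, h2⟩, rfl⟩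
      · rintro ⟨c, ⟨h1, h2⟩, rfl⟩; exact ⟨c, h1, h2, rfl⟩
    rw [hset2, Set.ncard_coe_finset]
    -- fiberwise counting: each pair is hit exactly twice
    have hfib : F1.card = ∑ s ∈ F2, (F1.filter (fun c => ({c, c + η} : Finset (ThetaChar 4)) = s)).card := by
      apply Finset.card_eq_sum_card_fiberwise
      intro c hc
      exact Finset.mem_image_of_mem _ hc
    have hfib2 : ∀ s ∈ F2, (F1.filter (fun c => ({c, c + η} : Finset (ThetaChar 4)) = s)).card = 2 := by
      intro s hs
      rw [hF2, Finset.mem_image] at hs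
      obtain ⟨c, hc, rfl⟩ := hs
      have : F1.filter (fun c' => ({c', c' + η} : Finset (ThetaChar 4)) = {c, c + η})
          = {c, c + η} := by
        ext c'
        simp only [Finset.mem_filter, Finset.mem_insert, Finset.mem_singleton]
        constructor
        · rintro ⟨-, hpair⟩
          have : c' ∈ ({c, c + η} : Finset (ThetaChar 4)) := by
            rw [← hpair]; simp
          simpa using this
        · rintro (rfl | rfl)
          · exact ⟨hc, rfl⟩
          · exact ⟨hmem c hc, by rw [hinv, Finset.pair_comm]⟩
      rw [this, Finset.card_pair (hne c)]
    have h2 : F1.card = 2 * F2.card := by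
      rw [hfib, Finset.sum_congr rfl hfib2, Finset.sum_const, smul_eq_mul, mul_comm]
    rw [hcard1] at h2
    omega
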